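/- Suppose ‖D_n^p‖ ≤ C exp(−c₀ n^{−2(k+1)/(2k+3)} p) for every integer p ≥ 0, where c₀ > 0 and C > 0, and let (θ_i)_{i≥1} be real numbers with |θ_i| ≤ c/n. If G_0 = 0 and G_i = D_n G_{i−1} + n^{−(k+1)/(2k+3)} θ_i q for i ≥ 1, then for every i ≥ 1, ‖G_i‖ ≤ C c ‖q‖ (1 + c₀) c₀^{−1} n^{−(k+2)/(2k+3)}. -/

import Mathlib

open Matrix Finset
set_option maxHeartbeats 1000000
open scoped Matrix.Norms.L2Operator

/-- If `D_n = I + n^{−2(k+1)/(2k+3)}(a − qA)` satisfies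
`‖D_n^p‖ ≤ C exp(−c₀ n^{−2(k+1)/(2k+3)} p)` in the ℓ²-operator norm, `|θ_i| ≤ c/n`,
`G_0 = 0` and `G_i = D_n G_{i−1} + n^{−(k+1)/(2k+3)} θ_i q`, then
`‖G_i‖ ≤ C c ‖q‖ (1 + c₀) c₀⁻¹ n^{−(k+2)/(2k+3)}` for every `i ≥ 1`. -/
theorem nuisance_recursion_norm_bound
    (k n : ℕ) (hn : 1 ≤ n)
    (q : EuclideanSpace ℝ (Fin (k + 1)))
    (a qA Dn : Matrix (Fin (k + 1)) (Fin (k + 1)) ℝ)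
    (ha : ∀ j l, a j l = if (l : ℕ) = (j : ℕ) + 1 then 1 else 0)
    (hqA : ∀ x : Fin (k + 1) → ℝ, qA.mulVec x = fun j => x 0 * q j)
    (hDn : Dn = 1 + (n : ℝ) ^ (-(2 * ((k : ℝ) + 1)) / (2 * (k : ℝ) + 3)) • (a - qA))
    (c₀ C c : ℝ) (hc₀ : 0 < c₀) (hC : 0 < C)
    (hnorm : ∀ p : ℕ,
      ‖Dn ^ p‖ ≤ C * Real.exp (-c₀ * (n : ℝ) ^ (-(2 * ((k : ℝ) + 1)) / (2 * (k : ℝ) + 3)) * p))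
    (θ : ℕ → ℝ) (hθ : ∀ i, 1 ≤ i → |θ i| ≤ c / n)
    (G : ℕ → EuclideanSpace ℝ (Fin (k + 1))) (hG0 : G 0 = 0)
    (hGrec : ∀ i, 1 ≤ i →
      G i = toEuclideanCLM (𝕜 := ℝ) Dn (G (i - 1))
              + ((n : ℝ) ^ (-((k : ℝ) + 1) / (2 * (k : ℝ) + 3)) * θ i) • q) :
    ∀ i, 1 ≤ i →
      ‖G i‖ ≤ C * c * ‖q‖ * (1 + c₀) * c₀⁻¹ * (n : ℝ) ^ (-((k : ℝ) + 2) / (2 * (k : ℝ) + 3)) := by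
  set e1 : ℝ := -((k : ℝ) + 1) / (2 * (k : ℝ) + 3) with he1
  set e2 : ℝ := -(2 * ((k : ℝ) + 1)) / (2 * (k : ℝ) + 3) with he2
  set T := toEuclideanCLM (𝕜 := ℝ) Dn with hT
  have hnR : (1 : ℝ) ≤ (n : ℝ) := by exact_mod_cast hn
  have hn0 : (0 : ℝ) < (n : ℝ) := lt_of_lt_of_le one_pos hnR
  have hden : (0 : ℝ) < 2 * (k : ℝ) + 3 := by positivity
  set α : ℝ := (n : ℝ) ^ e2 with hαdef
  have hα : 0 < α := Real.rpow_pos_of_pos hn0 _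
  have hα1 : α ≤ 1 := by
    apply Real.rpow_le_one_of_one_le_of_nonpos hnR
    rw [he2]
    apply div_nonpos_of_nonpos_of_nonneg <;> [linarith [Nat.cast_nonneg (α := ℝ) k]; linarith]
  have hβ : 0 < (n : ℝ) ^ e1 := Real.rpow_pos_of_pos hn0 _
  have hc : 0 ≤ c := by
    by_contra h
    push_neg at h
    have h1 : c / n < 0 := div_neg_of_neg_of_pos h hn0
    linarith [(abs_nonneg (θ 1)).trans (hθ 1 le_rfl)]
  set r : ℝ := Real.exp (-c₀ * α) with hrdef
  have hr0 : 0 < r := Real.exp_pos _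
  have hx : 0 < c₀ * α := mul_pos hc₀ hα
  have hrlt : r ≤ (1 + c₀ * α)⁻¹ := by
    rw [hrdef, neg_mul, Real.exp_neg]
    apply inv_anti₀ (by linarith)
    linarith [Real.add_one_le_exp (c₀ * α)]
  have hr1 : r < 1 := by
    rw [hrdef, Real.exp_lt_one_iff]
    nlinarith
  -- representation of G m as a sum
  have hrep : ∀ m : ℕ, G m = ∑ p ∈ Finset.range m, (((n : ℝ) ^ e1 * θ (m - p)) • (T ^ p) q) := by
    intro m
    induction m with
    | zero => simpa using hG0
    | succ m ih =>
      rw [hGrec (m + 1) (Nat.succ_le_succ (Nat.zero_le m)), Nat.add_sub_cancel, ih,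
        Finset.sum_range_succ']
      rw [map_sum]
      simp only [_root_.map_smul, pow_zero, ContinuousLinearMap.one_apply,
        Nat.succ_sub_succ_eq_sub, Nat.sub_zero, pow_succ', ContinuousLinearMap.mul_apply]
  intro i hi
  rw [hrep i]
  have hTp : ∀ p : ℕ, ‖T ^ p‖ ≤ C * r ^ p := by
    intro p
    have h1 : T ^ p = toEuclideanCLM (𝕜 := ℝ) (Dn ^ p) := (map_pow _ _ _).symm
    have h2 : ‖T ^ p‖ = ‖Dn ^ p‖ := by rw [h1, ← Matrix.cstar_norm_def]
    rw [h2]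
    calc ‖Dn ^ p‖ ≤ C * Real.exp (-c₀ * α * p) := hnorm p
      _ = C * r ^ p := by rw [hrdef, ← Real.exp_nat_mul, mul_comm (p : ℝ)]
  have step1 : ‖∑ p ∈ Finset.range i, (((n : ℝ) ^ e1 * θ (i - p)) • (T ^ p) q)‖
      ≤ ∑ p ∈ Finset.range i, ((n : ℝ) ^ e1 * (c / n) * ‖q‖ * (C * r ^ p)) := by
    refine (norm_sum_le _ _).trans (Finset.sum_le_sum ?_)
    intro p hp
    rw [norm_smul]
    have hip : 1 ≤ i - p := by
      have := Finset.mem_range.mp hp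
      omega
    have hθb : |θ (i - p)| ≤ c / n := hθ _ hip
    have h1 : ‖(n : ℝ) ^ e1 * θ (i - p)‖ ≤ (n : ℝ) ^ e1 * (c / n) := by
      rw [Real.norm_eq_abs, abs_mul, abs_of_pos hβ]
      exact mul_le_mul_of_nonneg_left hθb hβ.le
    have h2 : ‖(T ^ p) q‖ ≤ (C * r ^ p) * ‖q‖ :=
      ((T ^ p).le_opNorm q).trans (mul_le_mul_of_nonneg_right (hTp p) (norm_nonneg q))
    calc ‖(n : ℝ) ^ e1 * θ (i - p)‖ * ‖(T ^ p) q‖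
        ≤ ((n : ℝ) ^ e1 * (c / n)) * ((C * r ^ p) * ‖q‖) := by
          apply mul_le_mul h1 h2 (norm_nonneg _)
          positivity
      _ = (n : ℝ) ^ e1 * (c / n) * ‖q‖ * (C * r ^ p) := by ring
  have geom : ∑ p ∈ Finset.range i, r ^ p ≤ (1 - r)⁻¹ := by
    rw [geom_sum_eq hr1.ne i]
    rw [div_le_iff_of_neg (by linarith : r - 1 < 0)]
    rw [inv_mul_eq_div, div_le_iff₀ (by linarith : (0:ℝ) < 1 - r)]
    nlinarith [pow_nonneg hr0.le i]
  have hinv : (1 - r)⁻¹ ≤ (1 + c₀) / (c₀ * α) := by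
    have h1 : c₀ * α / (1 + c₀ * α) ≤ 1 - r := by
      have : 1 - (1 + c₀ * α)⁻¹ = c₀ * α / (1 + c₀ * α) := by
        field_simp
        ring
      linarith [hrlt, this.symm.le]
    have h2 : 0 < c₀ * α / (1 + c₀ * α) := by positivity
    calc (1 - r)⁻¹ ≤ (c₀ * α / (1 + c₀ * α))⁻¹ := inv_anti₀ h2 h1
      _ = (1 + c₀ * α) / (c₀ * α) := by rw [inv_div]
      _ ≤ (1 + c₀) / (c₀ * α) := by
          gcongr
          nlinarith
  have e3eq : e1 - 1 - e2 = -((k : ℝ) + 2) / (2 * (k : ℝ) + 3) := by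
    rw [he1, he2]
    field_simp
    ring
  have key : (n : ℝ) ^ e1 / ((n : ℝ) * α) = (n : ℝ) ^ (-((k : ℝ) + 2) / (2 * (k : ℝ) + 3)) := by
    rw [← e3eq, Real.rpow_sub hn0, Real.rpow_sub hn0, Real.rpow_one, hαdef, div_div]
  calc ‖∑ p ∈ Finset.range i, (((n : ℝ) ^ e1 * θ (i - p)) • (T ^ p) q)‖
      ≤ ∑ p ∈ Finset.range i, ((n : ℝ) ^ e1 * (c / n) * ‖q‖ * (C * r ^ p)) := step1
    _ = ((n : ℝ) ^ e1 * (c / n) * ‖q‖ * C) * ∑ p ∈ Finset.range i, r ^ p := by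
        rw [Finset.mul_sum]
        exact Finset.sum_congr rfl fun p _ => by ring
    _ ≤ ((n : ℝ) ^ e1 * (c / n) * ‖q‖ * C) * (1 - r)⁻¹ := by
        apply mul_le_mul_of_nonneg_left geom
        positivity
    _ ≤ ((n : ℝ) ^ e1 * (c / n) * ‖q‖ * C) * ((1 + c₀) / (c₀ * α)) := by
        apply mul_le_mul_of_nonneg_left hinv
        positivity
    _ = C * c * ‖q‖ * (1 + c₀) * c₀⁻¹ * ((n : ℝ) ^ e1 / ((n : ℝ) * α)) := by
        field_simp
    _ = C * c * ‖q‖ * (1 + c₀) * c₀⁻¹ * (n : ℝ) ^ (-((k : ℝ) + 2) / (2 * (k : ℝ) + 3)) := by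
        rw [key]
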